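/- Let Γ be a discrete group in which every nontrivial element has infinite conjugacy class (ICC). Then no finite subgroup of Γ is confined; i.e., for every finite subgroup F ≤ Γ, the trivial subgroup lies in the closure of the conjugation orbit of F in the Chabauty space Sub(Γ) (equivalently, for every finite subset S ⊆ Γ∖{e} there exists γ ∈ Γ with γFγ⁻¹ ∩ S = ∅). -/

import Mathlib

open Pointwise

/-- If the centralizer of `x` has finite index, the conjugacy class of `x` is finite. -/
lemma conjClass_finite_of_centralizer_finiteIndex {Γ : Type*} [Group Γ] (x : Γ)
    (hfi : (Subgroup.centralizer {x}).FiniteIndex) : {h : Γ | IsConj x h}.Finite := by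
  haveI := hfi
  haveI : Finite (Γ ⧸ Subgroup.centralizer {x}) := (Subgroup.centralizer {x}).finite_quotient_of_finiteIndex
  let f : Γ ⧸ Subgroup.centralizer {x} → Γ := fun q =>
    Quotient.liftOn' q (fun γ => γ * x * γ⁻¹) (by
      intro a b hab
      rw [QuotientGroup.leftRel_apply] at hab
      have h1 : x * (a⁻¹ * b) = (a⁻¹ * b) * x := Subgroup.mem_centralizer_iff.mp hab x rfl
      calc a * x * a⁻¹ = a * (x * (a⁻¹ * b)) * b⁻¹ := by group
        _ = a * ((a⁻¹ * b) * x) * b⁻¹ := by rw [h1]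
        _ = b * x * b⁻¹ := by group)
  have hsub : {h : Γ | IsConj x h} ⊆ Set.range f := by
    rintro h hh
    obtain ⟨c, hc⟩ := isConj_iff.mp hh
    exact ⟨QuotientGroup.mk c, hc⟩
  exact (Set.finite_range f).subset hsub

/-- In an ICC group, no finite subgroup is confined: for every finite subgroup `F` and
every finite set `S` of nontrivial elements, some conjugate of `F` avoids `S`. -/
theorem finite_subgroup_unconfined_of_icc {Γ : Type*} [Group Γ]
    (hicc : ∀ g : Γ, g ≠ 1 → {h : Γ | IsConj g h}.Infinite)
    (F : Subgroup Γ) (hF : (F : Set Γ).Finite)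
    (S : Finset Γ) (hS : (1 : Γ) ∉ S) :
    ∃ γ : Γ, ∀ x ∈ F, γ * x * γ⁻¹ ∉ S := by
  classical
  by_contra hcon
  push_neg at hcon
  -- index: pairs (x, s) with x ∈ F, s ∈ S, and some conjugator
  let s : Finset (Γ × Γ) := (hF.toFinset ×ˢ S).filter (fun p => ∃ γ : Γ, γ * p.1 * γ⁻¹ = p.2)
  let g : Γ × Γ → Γ := fun p => if h : ∃ γ : Γ, γ * p.1 * γ⁻¹ = p.2 then h.choose else 1
  let H : Γ × Γ → Subgroup Γ := fun p => Subgroup.centralizer {p.1}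
  have hcovers : ⋃ i ∈ s, (g i • (H i : Set Γ)) = Set.univ := by
    rw [Set.eq_univ_iff_forall]
    intro γ
    obtain ⟨x, hxF, hxS⟩ := hcon γ
    have hex : ∃ δ : Γ, δ * x * δ⁻¹ = γ * x * γ⁻¹ := ⟨γ, rfl⟩
    set p : Γ × Γ := (x, γ * x * γ⁻¹) with hp
    have hps : p ∈ s := by
      refine Finset.mem_filter.mpr ⟨Finset.mem_product.mpr ⟨?_, hxS⟩, hex⟩
      simpa using hxF
    have hgp : g p * x * (g p)⁻¹ = γ * x * γ⁻¹ := by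
      have : g p = hex.choose := by simp only [g]; exact dif_pos hex
      rw [this]
      exact hex.choose_spec
    refine Set.mem_biUnion hps ?_
    rw [mem_leftCoset_iff]
    refine Subgroup.mem_centralizer_iff.mpr ?_
    rintro y rfl
    -- show : p.1 * ((g p)⁻¹ * γ) = ((g p)⁻¹ * γ) * p.1
    have := hgp
    calc p.1 * ((g p)⁻¹ * γ) = (g p)⁻¹ * (g p * p.1 * (g p)⁻¹) * γ := by group
      _ = (g p)⁻¹ * (γ * p.1 * γ⁻¹) * γ := by rw [hgp]
      _ = ((g p)⁻¹ * γ) * p.1 := by group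
  obtain ⟨k, hks, hkfi⟩ := Subgroup.exists_finiteIndex_of_leftCoset_cover hcovers
  obtain ⟨hkmem, δ, hδ⟩ := Finset.mem_filter.mp hks
  have hk2S : k.2 ∈ S := (Finset.mem_product.mp hkmem).2
  have hk1 : k.1 ≠ 1 := by
    intro h1
    rw [h1, mul_one, mul_inv_cancel] at hδ
    exact hS (hδ ▸ hk2S)
  exact hicc k.1 hk1 (conjClass_finite_of_centralizer_finiteIndex k.1 hkfi)
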